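/- The time map T(α) converges to π/(2√2) as α → 0⁺. -/

import Mathlib

open Real Filter MeasureTheory intervalIntegral

lemma deriv_aux {α : ℝ} (hα : 0 < α) :
    ∀ x ∈ Set.Ioo (0:ℝ) α, HasDerivAt (fun y => Real.arcsin (y / α))
      (1 / Real.sqrt (α^2 - x^2)) x := by
  intro x hx
  have hd0 : (0:ℝ) ≤ x / α := div_nonneg hx.1.le hα.le
  have hd1 : x / α < 1 := (div_lt_one hα).2 hx.2
  have h1 : x / α ≠ -1 := by linarith
  have h2 : x / α ≠ 1 := by linarith
  have hder := (Real.hasDerivAt_arcsin h1 h2).comp x ((hasDerivAt_id x).div_const α)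
  refine hder.congr_deriv ?_
  symm
  have key : Real.sqrt (α^2 - x^2) = α * Real.sqrt (1 - (x/α)^2) := by
    rw [← Real.sqrt_sq hα.le, ← Real.sqrt_mul (sq_nonneg α)]
    congr 1
    field_simp
    rw [Real.sq_sqrt (sq_nonneg α)]
  have hpos : 0 < Real.sqrt (1 - (x/α)^2) := Real.sqrt_pos.2 (by nlinarith)
  rw [key, one_div, mul_inv, one_div, one_div]
  ring

lemma cont_aux {α : ℝ} (hα : 0 < α) :
    ContinuousOn (fun y => Real.arcsin (y / α)) (Set.Icc 0 α) :=
  (Real.continuous_arcsin.comp (continuous_id.div_const α)).continuousOn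

lemma sqrt_integrand_nonneg {α : ℝ} : ∀ x ∈ Set.Ioo (0:ℝ) α, 0 ≤ 1 / Real.sqrt (α^2 - x^2) :=
  fun x _ => by positivity

lemma sqrt_intervalIntegrable {α : ℝ} (hα : 0 < α) :
    IntervalIntegrable (fun x => 1 / Real.sqrt (α^2 - x^2)) volume 0 α := by
  rw [intervalIntegrable_iff_integrableOn_Ioc_of_le hα.le]
  exact intervalIntegral.integrableOn_deriv_of_nonneg (cont_aux hα) (deriv_aux hα)
    sqrt_integrand_nonneg

lemma sqrt_integral_eq {α : ℝ} (hα : 0 < α) :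
    ∫ x in (0:ℝ)..α, 1 / Real.sqrt (α^2 - x^2) = π / 2 := by
  rw [intervalIntegral.integral_eq_sub_of_hasDeriv_right_of_le hα.le (cont_aux hα)
    (fun x hx => ((deriv_aux hα) x hx).hasDerivWithinAt) (sqrt_intervalIntegrable hα)]
  simp [div_self hα.ne', Real.arcsin_one]

lemma cos_diff_eq (x α : ℝ) :
    Real.cos (2*x) - Real.cos (2*α) = 2 * Real.sin (α + x) * Real.sin (α - x) := by
  rw [Real.cos_sub_cos]
  have h1 : (2*x + 2*α)/2 = α + x := by ring
  have h2 : (2*x - 2*α)/2 = -(α - x) := by ring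
  rw [h1, h2, Real.sin_neg]
  ring

lemma prod_upper {α x : ℝ} (hx : x ∈ Set.Icc 0 α) (hpi : α ≤ 1/2) :
    Real.cos (2*x) - Real.cos (2*α) ≤ 2 * (α^2 - x^2) := by
  rw [cos_diff_eq]
  have h1 : 0 ≤ α + x := by linarith [hx.1, hx.2]
  have h2 : 0 ≤ α - x := by linarith [hx.2]
  have k1 := Real.sin_le h1
  have k2 := Real.sin_le h2
  have n2 : 0 ≤ Real.sin (α - x) :=
    Real.sin_nonneg_of_nonneg_of_le_pi h2 (by linarith [Real.pi_gt_three, hx.1])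
  nlinarith [mul_le_mul k1 k2 n2 h1]

lemma prod_lower {α x : ℝ} (hα : 0 < α) (hα2 : α ≤ 1/2) (hx : x ∈ Set.Icc 0 α) :
    2 * (1-α^2)^2 * (α^2 - x^2) ≤ Real.cos (2*x) - Real.cos (2*α) := by
  rw [cos_diff_eq]
  rcases eq_or_lt_of_le hx.2 with rfl | hxα
  · simp
  · have hx0 := hx.1
    have h1 : 0 < α + x := by linarith
    have h1' : α + x ≤ 1 := by linarith
    have h2 : 0 < α - x := by linarith
    have h2' : α - x ≤ 1 := by linarith
    have k1 := Real.sin_gt_sub_cube h1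
    have k2 := Real.sin_gt_sub_cube h2
    have hb1 : α + x ≤ 2*α := by linarith
    have hb2 : α - x ≤ 2*α := by linarith
    have q1 : (α+x)^2 ≤ (2*α)^2 := by nlinarith
    have q2 : (α-x)^2 ≤ (2*α)^2 := by nlinarith
    have s1 : (α+x) * (1 - α^2) ≤ Real.sin (α+x) := by nlinarith [mul_le_mul_of_nonneg_left q1 h1.le]
    have s2 : (α-x) * (1 - α^2) ≤ Real.sin (α-x) := by nlinarith [mul_le_mul_of_nonneg_left q2 h2.le]
    have hα1 : 0 < 1 - α^2 := by nlinarith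
    have n1 : 0 ≤ Real.sin (α + x) :=
      Real.sin_nonneg_of_nonneg_of_le_pi h1.le (by linarith [Real.pi_gt_three])
    nlinarith [mul_le_mul s1 s2 (by positivity) n1]

lemma integrand_ge {α : ℝ} (hα : 0 < α) (hα2 : α ≤ 1/2) :
    ∀ x ∈ Set.Icc (0:ℝ) α,
      (1/Real.sqrt 2) * (1 / Real.sqrt (α^2 - x^2)) ≤
      1 / Real.sqrt (Real.cos (2*x) - Real.cos (2*α)) := by
  intro x hx
  rcases eq_or_lt_of_le hx.2 with rfl | hxα
  · simp [sub_self]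
  · have hα1 : (0:ℝ) < 1 - α^2 := by nlinarith
    have hxpos : 0 < α^2 - x^2 := by nlinarith [hx.1]
    have hpos : 0 < Real.cos (2*x) - Real.cos (2*α) := by
      have := prod_lower hα hα2 hx
      nlinarith [mul_pos (mul_pos (by norm_num : (0:ℝ)<2) (pow_pos hα1 2)) hxpos]
    have hle : Real.sqrt (Real.cos (2*x) - Real.cos (2*α)) ≤
        Real.sqrt 2 * Real.sqrt (α^2 - x^2) := by
      rw [← Real.sqrt_mul (by norm_num : (0:ℝ) ≤ 2)]
      exact Real.sqrt_le_sqrt (prod_upper hx hα2)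
    rw [one_div_mul_one_div]
    exact one_div_le_one_div_of_le (Real.sqrt_pos.2 hpos) hle

lemma integrand_le {α : ℝ} (hα : 0 < α) (hα2 : α ≤ 1/2) :
    ∀ x ∈ Set.Icc (0:ℝ) α,
      1 / Real.sqrt (Real.cos (2*x) - Real.cos (2*α)) ≤
      (1/((1-α^2) * Real.sqrt 2)) * (1 / Real.sqrt (α^2 - x^2)) := by
  intro x hx
  rcases eq_or_lt_of_le hx.2 with rfl | hxα
  · rw [sub_self, Real.sqrt_zero, div_zero]
    simp
  · have hα1 : (0:ℝ) < 1 - α^2 := by nlinarith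
    have hxpos : 0 < α^2 - x^2 := by nlinarith [hx.1]
    have hle : (1-α^2) * Real.sqrt 2 * Real.sqrt (α^2 - x^2) ≤
        Real.sqrt (Real.cos (2*x) - Real.cos (2*α)) := by
      have : (1-α^2) * Real.sqrt 2 * Real.sqrt (α^2 - x^2)
          = Real.sqrt (2 * (1-α^2)^2 * (α^2 - x^2)) := by
        rw [Real.sqrt_mul (by positivity), Real.sqrt_mul (by norm_num : (0:ℝ) ≤ 2),
          Real.sqrt_sq hα1.le]
        ring
      rw [this]
      exact Real.sqrt_le_sqrt (prod_lower hα hα2 hx)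
    rw [one_div_mul_one_div]
    exact one_div_le_one_div_of_le (by positivity) hle

lemma comp_integrable {α : ℝ} (hα : 0 < α) (c : ℝ) :
    IntervalIntegrable (fun x => c * (1 / Real.sqrt (α^2 - x^2))) volume 0 α :=
  (sqrt_intervalIntegrable hα).const_mul c

lemma timeMap_integrable {α : ℝ} (hα : 0 < α) (hα2 : α ≤ 1/2) :
    IntervalIntegrable (fun x => 1 / Real.sqrt (Real.cos (2*x) - Real.cos (2*α)))
      volume 0 α := by
  have hg := comp_integrable hα (1/((1-α^2) * Real.sqrt 2))
  rw [intervalIntegrable_iff_integrableOn_Ioc_of_le hα.le] at hg ⊢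
  have hm : Measurable (fun x => 1 / Real.sqrt (Real.cos (2*x) - Real.cos (2*α))) := by
    apply Measurable.div measurable_const
    exact Real.continuous_sqrt.measurable.comp
      ((Real.continuous_cos.comp (continuous_const.mul continuous_id)).sub
        continuous_const).measurable
  apply hg.mono' hm.aestronglyMeasurable
  refine (MeasureTheory.ae_restrict_iff' measurableSet_Ioc).2 (Filter.Eventually.of_forall ?_)
  intro x hx
  rw [Real.norm_of_nonneg (one_div_nonneg.2 (Real.sqrt_nonneg _))]
  exact integrand_le hα hα2 x ⟨hx.1.le, hx.2⟩

/-- The time map `T(α) = ∫₀^α dx / √(cos 2x − cos 2α)`. -/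
noncomputable def timeMapT (α : ℝ) : ℝ :=
  ∫ x in (0:ℝ)..α, 1 / Real.sqrt (Real.cos (2 * x) - Real.cos (2 * α))

/-- `T(α) → π/(2√2)` as `α → 0⁺`. -/
theorem timeMapT_tendsto_zero :
    Tendsto timeMapT (nhdsWithin 0 (Set.Ioi 0)) (nhds (π / (2 * Real.sqrt 2))) := by
  have hmem : Set.Ioo (0:ℝ) (1/2) ∈ nhdsWithin (0:ℝ) (Set.Ioi 0) :=
    Ioo_mem_nhdsGT (by norm_num)
  have hs2 : (0:ℝ) < Real.sqrt 2 := Real.sqrt_pos.2 (by norm_num)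
  apply tendsto_of_tendsto_of_tendsto_of_le_of_le'
    (g := fun _ : ℝ => π/(2*Real.sqrt 2))
    (h := fun α => 1/((1-α^2) * Real.sqrt 2) * (π/2))
    tendsto_const_nhds
  · have hne : ((1-(0:ℝ)^2) * Real.sqrt 2) ≠ 0 := by
      norm_num
    have hc : ContinuousAt (fun α : ℝ => 1/((1-α^2) * Real.sqrt 2) * (π/2)) 0 := by
      apply ContinuousAt.mul _ continuousAt_const
      exact ContinuousAt.div continuousAt_const (by fun_prop) hne
    have heval : 1/((1-(0:ℝ)^2) * Real.sqrt 2) * (π/2) = π/(2*Real.sqrt 2) := by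
      have h0 : (1-(0:ℝ)^2) = 1 := by norm_num
      rw [h0, one_mul, one_div, inv_mul_eq_div, div_div]

    have := hc.tendsto.mono_left (nhdsWithin_le_nhds (s := Set.Ioi (0:ℝ)))
    rwa [heval] at this
  · filter_upwards [hmem] with α hα
    have h1 : 0 < α := hα.1
    have h2 : α ≤ 1/2 := hα.2.le
    have key : ∫ x in (0:ℝ)..α, (1/Real.sqrt 2) * (1/Real.sqrt (α^2 - x^2))
        = (1/Real.sqrt 2) * (π/2) := by
      rw [intervalIntegral.integral_const_mul, sqrt_integral_eq h1]
    have hmono := intervalIntegral.integral_mono_on h1.le (comp_integrable h1 _)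
      (timeMap_integrable h1 h2) (integrand_ge h1 h2)
    rw [key] at hmono
    calc π/(2*Real.sqrt 2) = (1/Real.sqrt 2) * (π/2) := by
          rw [one_div, inv_mul_eq_div, div_div]
      _ ≤ timeMapT α := hmono
  · filter_upwards [hmem] with α hα
    have h1 : 0 < α := hα.1
    have h2 : α ≤ 1/2 := hα.2.le
    have key : ∫ x in (0:ℝ)..α, (1/((1-α^2) * Real.sqrt 2)) * (1/Real.sqrt (α^2 - x^2))
        = (1/((1-α^2) * Real.sqrt 2)) * (π/2) := by
      rw [intervalIntegral.integral_const_mul, sqrt_integral_eq h1]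
    have hmono := intervalIntegral.integral_mono_on h1.le
      (timeMap_integrable h1 h2) (comp_integrable h1 _) (integrand_le h1 h2)
    rw [key] at hmono
    exact hmono
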